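/- Let $K$ be a field, $X$ the generic symmetric $n \times n$ matrix (with entries $x_{ij} = x_{ji}$), $Y$ the generic $n \times 1$ column, and $g_1, \ldots, g_n$ the entries of $XY$ in the polynomial ring $R = K[x_{ij} (i \le j), y_j]$. Then $g_1, \ldots, g_n$ is a regular sequence in $R$. -/

import Mathlib

open MvPolynomial Matrix Finset

/-! ### Generic algebra lemmas -/

section Generic

lemma mem_ideal_map_equiv_iff' {R S : Type*} [CommRing R] [CommRing S]
    (f : R ≃+* S) (I : Ideal R) (x : R) :
    f x ∈ Ideal.map f I ↔ x ∈ I := by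
  have h0 : Ideal.map f I = Ideal.map (f : R →+* S) I := rfl
  rw [h0, Ideal.map_comap_of_equiv f, Ideal.mem_comap, RingEquiv.symm_apply_apply]

lemma isPrime_of_map_equiv' {R S : Type*} [CommRing R] [CommRing S] (f : R ≃+* S)
    {I : Ideal R} (h : (Ideal.map f I).IsPrime) : I.IsPrime := by
  have h0 : Ideal.map f I = Ideal.map (f : R →+* S) I := rfl
  rw [h0] at h
  have heq : I = Ideal.comap (f : R →+* S) (Ideal.map (f : R →+* S) I) := by
    rw [Ideal.map_comap_of_equiv f]
    ext x
    simp only [Ideal.mem_comap, RingHom.coe_coe, RingEquiv.symm_apply_apply]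
  rw [heq]
  exact h.comap _

lemma comap_C_map_C' {S : Type*} [CommRing S] (I : Ideal S) :
    Ideal.comap (Polynomial.C : S →+* Polynomial S)
      (Ideal.map (Polynomial.C : S →+* Polynomial S) I) = I := by
  ext x
  rw [Ideal.mem_comap, Ideal.mem_map_C_iff]
  constructor
  · intro h
    simpa using h 0
  · intro hx m
    rw [Polynomial.coeff_C]
    split
    · exact hx
    · exact I.zero_mem

variable {S : Type*} [CommRing S] [IsDomain S]

/-- If `p` is prime and `h ∉ (p)`, then `p` is a nonzerodivisor mod `(pX+h)`. -/
theorem step_cancel' (p h : S) (hp : (Ideal.span {p} : Ideal S).IsPrime) (hp0 : p ≠ 0)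
    (hh : h ∉ Ideal.span {p}) (f q : Polynomial S)
    (heq : Polynomial.C p * f = (Polynomial.C p * Polynomial.X + Polynomial.C h) * q) :
    ∃ q₁, f = (Polynomial.C p * Polynomial.X + Polynomial.C h) * q₁ := by
  have hdom : IsDomain (S ⧸ Ideal.span {p}) := (Ideal.Quotient.isDomain_iff_prime _).mpr hp
  set π := Ideal.Quotient.mk (Ideal.span {p}) with hπ
  have hπp : π p = 0 := by
    rw [Ideal.Quotient.eq_zero_iff_mem]; exact Ideal.subset_span rfl
  have hπh : π h ≠ 0 := fun hz => hh (Ideal.Quotient.eq_zero_iff_mem.mp hz)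
  have hmap := congrArg (Polynomial.map π) heq
  rw [Polynomial.map_mul, Polynomial.map_mul, Polynomial.map_add, Polynomial.map_mul,
    Polynomial.map_C, Polynomial.map_C, Polynomial.map_X, hπp, Polynomial.C_0, zero_mul,
    zero_mul, zero_add] at hmap
  have hq0 : q.map π = 0 := by
    rcases mul_eq_zero.mp hmap.symm with h1 | h1
    · exact absurd (Polynomial.C_eq_zero.mp h1) hπh
    · exact h1
  have hqmem : q ∈ (Ideal.span {p} : Ideal S).map (Polynomial.C : S →+* Polynomial S) := by
    rw [Ideal.mem_map_C_iff]
    intro n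
    have := Polynomial.ext_iff.mp hq0 n
    rw [Polynomial.coeff_map, Polynomial.coeff_zero] at this
    exact Ideal.Quotient.eq_zero_iff_mem.mp this
  rw [Ideal.map_span, Set.image_singleton, Ideal.mem_span_singleton] at hqmem
  obtain ⟨q₁, hq₁⟩ := hqmem
  refine ⟨q₁, mul_left_cancel₀ (Polynomial.C_ne_zero.mpr hp0) ?_⟩
  rw [heq, hq₁]; ring

theorem step_cancel_pow' (p h : S) (hp : (Ideal.span {p} : Ideal S).IsPrime) (hp0 : p ≠ 0)
    (hh : h ∉ Ideal.span {p}) (m : ℕ) (f : Polynomial S)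
    (heq : Polynomial.C (p ^ m) * f ∈
      Ideal.span {Polynomial.C p * Polynomial.X + Polynomial.C h}) :
    f ∈ Ideal.span ({Polynomial.C p * Polynomial.X + Polynomial.C h} : Set (Polynomial S)) := by
  induction m generalizing f with
  | zero => simpa using heq
  | succ k ih =>
    rw [Ideal.mem_span_singleton] at heq
    obtain ⟨q, hq⟩ := heq
    have : Polynomial.C p * (Polynomial.C (p ^ k) * f) =
        (Polynomial.C p * Polynomial.X + Polynomial.C h) * q := by
      rw [← hq, pow_succ]; push_cast [Polynomial.C_mul]; ring
    obtain ⟨q₁, hq₁⟩ := step_cancel' p h hp hp0 hh _ q this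
    exact ih _ (Ideal.mem_span_singleton.mpr ⟨q₁, hq₁⟩)

theorem prime_span_linear' (p h : S) (hp : (Ideal.span {p} : Ideal S).IsPrime) (hp0 : p ≠ 0)
    (hh : h ∉ Ideal.span {p}) :
    (Ideal.span ({Polynomial.C p * Polynomial.X + Polynomial.C h} :
      Set (Polynomial S))).IsPrime := by
  classical
  set F := Polynomial.C p * Polynomial.X + Polynomial.C h with hF
  set A := Localization.Away p with hA
  have hle : Submonoid.powers p ≤ nonZeroDivisors S :=
    powers_le_nonZeroDivisors_of_noZeroDivisors hp0
  have hdomA : IsDomain A := IsLocalization.isDomain_of_le_nonZeroDivisors (S := A) hle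
  have hinj : Function.Injective (algebraMap S A) := IsLocalization.injective A hle
  set t : A := -(algebraMap S A h * IsLocalization.Away.invSelf p) with ht
  set φ : Polynomial S →+* A := Polynomial.eval₂RingHom (algebraMap S A) t with hφ
  have hpt : algebraMap S A p * t = -(algebraMap S A h) := by
    rw [ht, mul_neg, ← mul_assoc, mul_comm (algebraMap S A p) (algebraMap S A h), mul_assoc,
      IsLocalization.Away.mul_invSelf, mul_one]
  have hker : Ideal.span ({F} : Set (Polynomial S)) = RingHom.ker φ := by
    apply le_antisymm
    · rw [Ideal.span_le]
      intro x hx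
      rw [Set.mem_singleton_iff.mp hx]
      simp only [SetLike.mem_coe, RingHom.mem_ker, hφ, hF, Polynomial.coe_eval₂RingHom]
      rw [Polynomial.eval₂_add, Polynomial.eval₂_mul, Polynomial.eval₂_C, Polynomial.eval₂_X,
        Polynomial.eval₂_C, hpt]
      ring
    · intro f hf
      rw [RingHom.mem_ker] at hf
      have hroot : (f.map (algebraMap S A)).IsRoot t := by
        rw [Polynomial.IsRoot, Polynomial.eval_map]
        exact hf
      obtain ⟨u, hu⟩ := (Polynomial.dvd_iff_isRoot.mpr hroot)
      have hFmap : F.map (algebraMap S A) =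
          Polynomial.C (algebraMap S A p) * (Polynomial.X - Polynomial.C t) := by
        rw [hF]
        rw [Polynomial.map_add, Polynomial.map_mul, Polynomial.map_C, Polynomial.map_X,
          Polynomial.map_C, mul_sub, ← Polynomial.C_mul, hpt, Polynomial.C_neg]
        ring
      set w : Polynomial A := Polynomial.C (IsLocalization.Away.invSelf (S := A) p) * u with hw
      have hfw : f.map (algebraMap S A) = F.map (algebraMap S A) * w := by
        rw [hFmap, hw, hu]
        have : Polynomial.C (algebraMap S A p) * Polynomial.C
            (IsLocalization.Away.invSelf (S := A) p) = 1 := by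
          rw [← Polynomial.C_mul, IsLocalization.Away.mul_invSelf, Polynomial.C_1]
        calc (Polynomial.X - Polynomial.C t) * u
            = 1 * ((Polynomial.X - Polynomial.C t) * u) := by ring
          _ = Polynomial.C (algebraMap S A p) * (Polynomial.X - Polynomial.C t) *
              (Polynomial.C (IsLocalization.Away.invSelf (S := A) p) * u) := by
              rw [← this]; ring
      obtain ⟨b, hb⟩ := IsLocalization.integerNormalization_map_to_map (Submonoid.powers p) w
      obtain ⟨m, hm⟩ := b.2
      have key : Polynomial.C (p ^ m) * f =
          F * IsLocalization.integerNormalization (Submonoid.powers p) w := by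
        have hm' : p ^ m = (b : S) := hm
        apply Polynomial.map_injective (algebraMap S A) hinj
        rw [Polynomial.map_mul, Polynomial.map_mul, Polynomial.map_C, hb, hfw, ← hm',
          Algebra.smul_def, Polynomial.algebraMap_apply]
        ring
      exact step_cancel_pow' p h hp hp0 hh m f (key ▸ Ideal.mul_mem_right _ _
        (Ideal.subset_span rfl))
  rw [hker]
  exact RingHom.ker_isPrime φ

end Generic

section SpanX

variable {σ : Type*} {K : Type*} [CommRing K] [IsDomain K]

noncomputable def zeroOut (s : Set σ) [DecidablePred (· ∈ s)] :
    MvPolynomial σ K →ₐ[K] MvPolynomial σ K :=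
  aeval (fun v => if v ∈ s then 0 else X v)

omit [IsDomain K] in
lemma zeroOut_sub_self_mem (s : Set σ) [DecidablePred (· ∈ s)] (f : MvPolynomial σ K) :
    f - zeroOut s f ∈ Ideal.span (X '' s : Set (MvPolynomial σ K)) := by
  induction f using MvPolynomial.induction_on with
  | C a => simp [zeroOut]
  | add p q hp hq =>
    have := Ideal.add_mem _ hp hq
    simpa [map_add, add_sub_add_comm] using this
  | mul_X p v hp =>
    rw [_root_.map_mul, zeroOut, aeval_X, ← zeroOut]
    by_cases hv : v ∈ s
    · rw [if_pos hv, mul_zero, sub_zero]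
      exact Ideal.mul_mem_left _ p (Ideal.subset_span ⟨v, hv, rfl⟩)
    · rw [if_neg hv]
      have : p * X v - zeroOut s p * X v = (p - zeroOut s p) * X v := by ring
      rw [this]
      exact Ideal.mul_mem_right _ _ hp

omit [IsDomain K] in
lemma mem_span_X_iff_zeroOut (s : Set σ) [DecidablePred (· ∈ s)] (f : MvPolynomial σ K) :
    f ∈ Ideal.span (X '' s : Set (MvPolynomial σ K)) ↔ zeroOut s f = 0 := by
  constructor
  · intro hf
    have hle : Ideal.span (X '' s : Set (MvPolynomial σ K)) ≤
        RingHom.ker (zeroOut (K := K) s).toRingHom := by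
      rw [Ideal.span_le]
      rintro x ⟨v, hv, rfl⟩
      simp [zeroOut, RingHom.mem_ker, hv]
    exact hle hf
  · intro hf
    have := zeroOut_sub_self_mem s f
    rwa [hf, sub_zero] at this

theorem prime_span_X_image (s : Set σ) :
    (Ideal.span (X '' s : Set (MvPolynomial σ K))).IsPrime := by
  classical
  constructor
  · rw [Ideal.ne_top_iff_one, mem_span_X_iff_zeroOut]
    simp [zeroOut]
  · intro f g hfg
    rw [mem_span_X_iff_zeroOut] at hfg ⊢
    rw [mem_span_X_iff_zeroOut]
    rw [_root_.map_mul] at hfg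
    exact mul_eq_zero.mp hfg

end SpanX

namespace SymmRegAux

variable {K : Type*} [Field K] {n : ℕ}

abbrev Vt (n : ℕ) := ({p : Fin n × Fin n // p.1 ≤ p.2} ⊕ Fin n)

def xv (i j : Fin n) : Vt n := Sum.inl ⟨(min i j, max i j), min_le_max⟩
def yv (j : Fin n) : Vt n := Sum.inr j

lemma xv_ne_yv (i j k : Fin n) : xv i j ≠ yv k := by simp [xv, yv]

lemma yv_inj {j k : Fin n} : yv j = yv k ↔ j = k := by simp [yv]

lemma xv_eq_xv_iff {i k a b : Fin n} :
    xv i k = xv a b ↔ (min i k = min a b ∧ max i k = max a b) := by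
  simp [xv, Sum.inl.injEq, Subtype.ext_iff, Prod.ext_iff]

lemma eq_of_minmax {i a c : Fin n} (h1 : min i c = min a c) (h2 : max i c = max a c) :
    i = a := by
  rcases le_total i c with h | h <;> rcases le_total a c with h' | h'
  · rw [min_eq_left h, min_eq_left h'] at h1; exact h1
  · rw [min_eq_left h, min_eq_right h'] at h1
    rw [max_eq_right h, max_eq_left h'] at h2
    exact h1.trans h2
  · rw [min_eq_right h, min_eq_left h'] at h1
    rw [max_eq_left h, max_eq_right h'] at h2
    exact h2.trans h1
  · rw [max_eq_left h, max_eq_left h'] at h2; exact h2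

lemma xv_eq_xv_right_iff {i a c : Fin n} : xv i c = xv a c ↔ i = a := by
  rw [xv_eq_xv_iff]
  exact ⟨fun ⟨h1, h2⟩ => eq_of_minmax h1 h2, by rintro rfl; exact ⟨rfl, rfl⟩⟩

lemma xv_eq_diag_iff {i k a : Fin n} : xv i k = xv a a ↔ (i = a ∧ k = a) := by
  rw [xv_eq_xv_iff]
  constructor
  · rintro ⟨h1, h2⟩
    simp only [min_self, max_self] at h1 h2
    have hi : i = a := le_antisymm (h2 ▸ le_max_left i k) (h1 ▸ min_le_left i k)
    have hk : k = a := le_antisymm (h2 ▸ le_max_right i k) (h1 ▸ min_le_right i k)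
    exact ⟨hi, hk⟩
  · rintro ⟨rfl, rfl⟩; exact ⟨rfl, rfl⟩

variable (K)

noncomputable def gp (i : Fin n) : MvPolynomial (Vt n) K := ∑ k, X (xv i k) * X (yv k)

noncomputable def Jab (A B : Finset (Fin n)) : Ideal (MvPolynomial (Vt n) K) :=
  Ideal.span ((fun i => gp K i) '' ↑A ∪ (fun j => X (yv j)) '' ↑B)

/-- evaluation sending `x_{a,c} ↦ 1`, `y_c ↦ 1`, everything else to `0`. -/
noncomputable def pt (a c : Fin n) : Vt n → K := fun v =>
  if v = xv a c ∨ v = yv c then 1 else 0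

lemma eval_pt_gp (a c i : Fin n) :
    eval (pt K a c) (gp K i) = if i = a then 1 else 0 := by
  classical
  rw [gp, _root_.map_sum]
  rw [Finset.sum_eq_single c]
  · rw [_root_.map_mul, eval_X, eval_X, pt, pt]
    rw [if_pos (Or.inr rfl)]
    by_cases hia : i = a
    · subst hia
      rw [if_pos (Or.inl rfl), if_pos rfl, one_mul]
    · rw [if_neg, if_neg hia, mul_one]
      push_neg
      refine ⟨fun hc => hia (xv_eq_xv_right_iff.mp hc), xv_ne_yv _ _ _⟩
  · intro k _ hk
    rw [_root_.map_mul, eval_X, eval_X]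
    have : pt K a c (yv k) = 0 := by
      rw [pt, if_neg]
      push_neg
      exact ⟨fun hc => (xv_ne_yv a c k hc.symm), fun hc => hk (yv_inj.mp hc)⟩
    rw [this, mul_zero]
  · simp

lemma eval_pt_yv (a c j : Fin n) :
    eval (pt K a c) (X (yv j) : MvPolynomial (Vt n) K) = if j = c then 1 else 0 := by
  rw [eval_X, pt]
  by_cases hj : j = c
  · subst hj; rw [if_pos (Or.inr rfl), if_pos rfl]
  · rw [if_neg, if_neg hj]
    push_neg
    exact ⟨fun hc => (xv_ne_yv a c j hc.symm), fun hc => hj (yv_inj.mp hc)⟩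

lemma eval_pt_xdiag (a c : Fin n) (hca : c ≠ a) :
    eval (pt K a c) (X (xv a a) : MvPolynomial (Vt n) K) = 0 := by
  rw [eval_X, pt, if_neg]
  push_neg
  constructor
  · intro hc
    exact hca (xv_eq_diag_iff.mp hc.symm).2
  · exact xv_ne_yv a a c

/-- evaluation sending `y_a ↦ 1`, everything else to `0`. -/
noncomputable def pt2 (a : Fin n) : Vt n → K := fun v => if v = yv a then 1 else 0

lemma eval_pt2_gp (a i : Fin n) : eval (pt2 K a) (gp K i) = 0 := by
  rw [gp, _root_.map_sum]
  refine Finset.sum_eq_zero fun k _ => ?_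
  rw [_root_.map_mul, eval_X, pt2, if_neg (xv_ne_yv i k a), zero_mul]

lemma eval_pt2_yv (a j : Fin n) :
    eval (pt2 K a) (X (yv j) : MvPolynomial (Vt n) K) = if j = a then 1 else 0 := by
  rw [eval_X, pt2]
  by_cases hj : j = a
  · subst hj; rw [if_pos rfl, if_pos rfl]
  · rw [if_neg (fun hc => hj (yv_inj.mp hc)), if_neg hj]

lemma not_mem_Jab_of_eval (A B : Finset (Fin n)) (φ : Vt n → K)
    (hgs : ∀ i ∈ A, eval φ (gp K i) = 0)
    (hys : ∀ j ∈ B, eval φ (X (yv j) : MvPolynomial (Vt n) K) = 0)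
    (f : MvPolynomial (Vt n) K) (hf : eval φ f ≠ 0) : f ∉ Jab K A B := by
  intro hmem
  apply hf
  have hle : Jab K A B ≤ RingHom.ker (eval φ) := by
    rw [Jab, Ideal.span_le]
    rintro x (⟨i, hi, rfl⟩ | ⟨j, hj, rfl⟩)
    · exact hgs i hi
    · exact hys j hj
  exact hle hmem

lemma X_yv_not_mem_Jab (a : Fin n) (A B : Finset (Fin n)) (haB : a ∉ B) :
    (X (yv a) : MvPolynomial (Vt n) K) ∉ Jab K A B := by
  apply not_mem_Jab_of_eval K A B (pt2 K a)
  · intro i _; exact eval_pt2_gp K a i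
  · intro j hj
    rw [eval_pt2_yv, if_neg]
    rintro rfl; exact haB hj
  · rw [eval_pt2_yv, if_pos rfl]
    exact one_ne_zero

lemma gp_not_mem_Jab (a : Fin n) (A B : Finset (Fin n)) (haA : a ∉ A) (haB : a ∉ B) :
    gp K a ∉ Jab K A B := by
  apply not_mem_Jab_of_eval K A B (pt K a a)
  · intro i hi
    rw [eval_pt_gp, if_neg]
    rintro rfl; exact haA hi
  · intro j hj
    rw [eval_pt_yv, if_neg]
    rintro rfl; exact haB hj
  · rw [eval_pt_gp, if_pos rfl]
    exact one_ne_zero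

lemma hR_not_mem_Jab (a c : Fin n) (A B : Finset (Fin n)) (haA : a ∉ A)
    (hca : c ≠ a) (hcB : c ∉ B) :
    gp K a - X (xv a a) * X (yv a) ∉ Jab K A (insert a B) := by
  apply not_mem_Jab_of_eval K A (insert a B) (pt K a c)
  · intro i hi
    rw [eval_pt_gp, if_neg]
    rintro rfl; exact haA hi
  · intro j hj
    rw [eval_pt_yv, if_neg]
    rintro rfl
    rcases Finset.mem_insert.mp hj with h | h
    · exact hca h
    · exact hcB h
  · rw [_root_.map_sub, _root_.map_mul, eval_pt_gp, if_pos rfl, eval_pt_xdiag K a c hca, zero_mul, sub_zero]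
    exact one_ne_zero

section Pivot

variable (a : Fin n)

/-- the variables other than the diagonal variable `x_{aa}`. -/
abbrev Vp (a : Fin n) := {v : Vt n // v ≠ xv a a}

noncomputable def lv : Vt n → Vp a := fun v =>
  if h : v = xv a a then ⟨yv a, (xv_ne_yv a a a).symm⟩ else ⟨v, h⟩

lemma lv_val {v : Vt n} (h : v ≠ xv a a) : lv a v = ⟨v, h⟩ := dif_neg h

noncomputable def eA :
    MvPolynomial (Vt n) K ≃ₐ[K] Polynomial (MvPolynomial (Vp a) K) :=
  (renameEquiv K (Equiv.optionSubtypeNe (xv a a)).symm).trans (optionEquivLeft K (Vp a))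

lemma eA_X_of_ne {v : Vt n} (h : v ≠ xv a a) :
    eA K a (X v) = Polynomial.C (X (⟨v, h⟩ : Vp a)) := by
  rw [eA, AlgEquiv.trans_apply, renameEquiv_apply, rename_X,
    Equiv.optionSubtypeNe_symm_of_ne h, optionEquivLeft_X_some]

lemma eA_X_diag : eA K a (X (xv a a)) = Polynomial.X := by
  rw [eA, AlgEquiv.trans_apply, renameEquiv_apply, rename_X,
    Equiv.optionSubtypeNe_symm_self, optionEquivLeft_X_none]

noncomputable def eR : MvPolynomial (Vt n) K ≃+* Polynomial (MvPolynomial (Vp a) K) :=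
  (eA K a).toRingEquiv

lemma eR_apply (x : MvPolynomial (Vt n) K) : eR K a x = eA K a x := rfl

noncomputable def Gq (i : Fin n) : MvPolynomial (Vp a) K :=
  ∑ k, X (lv a (xv i k)) * X (lv a (yv k))

noncomputable def Yq (j : Fin n) : MvPolynomial (Vp a) K := X (lv a (yv j))

noncomputable def Hq : MvPolynomial (Vp a) K :=
  ∑ k ∈ Finset.univ.erase a, X (lv a (xv a k)) * X (lv a (yv k))

lemma eA_yv (j : Fin n) : eA K a (X (yv j)) = Polynomial.C (Yq K a j) := by
  rw [eA_X_of_ne K a ((xv_ne_yv a a j).symm), Yq, lv_val]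

lemma eA_gp_of_ne {i : Fin n} (hi : i ≠ a) :
    eA K a (gp K i) = Polynomial.C (Gq K a i) := by
  rw [gp, _root_.map_sum, Gq, _root_.map_sum]
  refine Finset.sum_congr rfl fun k _ => ?_
  have hx : xv i k ≠ xv a a := fun hc => hi (xv_eq_diag_iff.mp hc).1
  rw [_root_.map_mul, eA_X_of_ne K a hx, eA_yv, Yq, lv_val a hx, Polynomial.C_mul]

lemma eA_gp_diag :
    eA K a (gp K a) = Polynomial.C (Yq K a a) * Polynomial.X + Polynomial.C (Hq K a) := by
  rw [gp, ← Finset.add_sum_erase _ _ (Finset.mem_univ a), map_add, _root_.map_sum,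
    _root_.map_mul, eA_X_diag, eA_yv, Hq, _root_.map_sum]
  congr 1
  · ring
  · refine Finset.sum_congr rfl fun k hk => ?_
    have hk' : k ≠ a := Finset.ne_of_mem_erase hk
    have hx : xv a k ≠ xv a a := fun hc => hk' (xv_eq_diag_iff.mp hc).2
    rw [_root_.map_mul, eA_X_of_ne K a hx, eA_yv, Yq, lv_val a hx, Polynomial.C_mul]

noncomputable def Iq (A B : Finset (Fin n)) : Ideal (MvPolynomial (Vp a) K) :=
  Ideal.span ((fun i => Gq K a i) '' ↑A ∪ (fun j => Yq K a j) '' ↑B)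

lemma map_eA_Jab {A : Finset (Fin n)} (B : Finset (Fin n)) (ha : a ∉ A) :
    Ideal.map (eR K a) (Jab K A B) = Ideal.map Polynomial.C (Iq K a A B) := by
  rw [Jab, Ideal.map_span, Iq, Ideal.map_span]
  congr 1
  rw [Set.image_union, Set.image_union, ← Set.image_comp, ← Set.image_comp,
    ← Set.image_comp, ← Set.image_comp]
  congr 1
  · apply Set.image_congr
    intro i hi
    exact eA_gp_of_ne K a (fun hc => ha (hc ▸ hi))
  · apply Set.image_congr
    intro j _
    exact eA_yv K a j

/-- The key inductive step: adjoining the generator `g_a` preserves primality. -/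
lemma step_prime (A B : Finset (Fin n)) (haA : a ∉ A) (haB : a ∉ B) (c : Fin n)
    (hcA : c ∉ A) (hca : c ≠ a) (hcB : c ∉ B)
    (IH1 : (Jab K A B).IsPrime) (IH2 : (Jab K A (insert a B)).IsPrime) :
    (Jab K (insert a A) B).IsPrime := by
  classical
  -- transfer the two inductive primality facts to the smaller polynomial ring
  have hIq0 : (Iq K a A B).IsPrime := by
    haveI := IH1
    have h1 : (Ideal.map (eR K a) (Jab K A B)).IsPrime :=
      Ideal.map_isPrime_of_equiv (eR K a)
    rw [map_eA_Jab K a B haA] at h1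
    have h2 := h1.comap (Polynomial.C : MvPolynomial (Vp a) K →+* Polynomial (MvPolynomial (Vp a) K))
    rwa [comap_C_map_C'] at h2
  have hIq1 : (Iq K a A (insert a B)).IsPrime := by
    haveI := IH2
    have h1 : (Ideal.map (eR K a) (Jab K A (insert a B))).IsPrime :=
      Ideal.map_isPrime_of_equiv (eR K a)
    rw [map_eA_Jab K a (insert a B) haA] at h1
    have h2 := h1.comap (Polynomial.C : MvPolynomial (Vp a) K →+* Polynomial (MvPolynomial (Vp a) K))
    rwa [comap_C_map_C'] at h2
  have hIq1eq : Iq K a A (insert a B) = Iq K a A B ⊔ Ideal.span {Yq K a a} := by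
    rw [Iq, Iq, Finset.coe_insert, Set.image_insert_eq, Set.union_insert, Ideal.span_insert,
      sup_comm]
  haveI hDom : IsDomain (MvPolynomial (Vp a) K ⧸ Iq K a A B) :=
    (Ideal.Quotient.isDomain_iff_prime _).mpr hIq0
  set mkq := Ideal.Quotient.mk (Iq K a A B) with hmkq
  set p : MvPolynomial (Vp a) K ⧸ Iq K a A B := mkq (Yq K a a) with hpdef
  set hh : MvPolynomial (Vp a) K ⧸ Iq K a A B := mkq (Hq K a) with hhdef
  -- `Y a ∉ I₀`
  have hYnot : Yq K a a ∉ Iq K a A B := by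
    intro hmem
    have h2 : Polynomial.C (Yq K a a) ∈ Ideal.map Polynomial.C (Iq K a A B) :=
      Ideal.mem_map_of_mem _ hmem
    rw [← map_eA_Jab K a B haA, ← eA_yv K a a, ← eR_apply] at h2
    have h3 : (X (yv a) : MvPolynomial (Vt n) K) ∈ Jab K A B := by
      have := (mem_ideal_map_equiv_iff' (eR K a)
        (Jab K A B) (X (yv a))).mp h2
      exact this
    exact X_yv_not_mem_Jab K a A B haB h3
  have hp0 : p ≠ 0 := by
    rw [hpdef, Ne, Ideal.Quotient.eq_zero_iff_mem]
    exact hYnot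
  have hspanp : (Ideal.span {p} : Ideal (MvPolynomial (Vp a) K ⧸ Iq K a A B)) =
      Ideal.map mkq (Ideal.span {Yq K a a}) := by
    rw [Ideal.map_span, Set.image_singleton]
  have hprimep : (Ideal.span {p} : Ideal (MvPolynomial (Vp a) K ⧸ Iq K a A B)).IsPrime := by
    rw [hspanp]
    have e2 := DoubleQuot.quotQuotEquivQuotSup (Iq K a A B) (Ideal.span {Yq K a a})
    haveI : IsDomain (MvPolynomial (Vp a) K ⧸ (Iq K a A B ⊔ Ideal.span {Yq K a a})) := by
      rw [← hIq1eq]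
      exact (Ideal.Quotient.isDomain_iff_prime _).mpr hIq1
    haveI : IsDomain ((MvPolynomial (Vp a) K ⧸ Iq K a A B) ⧸
        (Ideal.span {Yq K a a}).map mkq) :=
      MulEquiv.isDomain _ e2.toMulEquiv
    exact (Ideal.Quotient.isDomain_iff_prime _).mp this
  have hHnot : hh ∉ (Ideal.span {p} : Ideal (MvPolynomial (Vp a) K ⧸ Iq K a A B)) := by
    rw [hspanp, hhdef, hmkq]
    intro hmem
    rw [Ideal.mem_quotient_iff_mem_sup, sup_comm, ← hIq1eq] at hmem
    -- transfer to `R` and refute by evaluation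
    have h2 : Polynomial.C (Hq K a) ∈ Ideal.map Polynomial.C (Iq K a A (insert a B)) :=
      Ideal.mem_map_of_mem _ hmem
    rw [← map_eA_Jab K a (insert a B) haA] at h2
    have heArw : eA K a (gp K a - X (xv a a) * X (yv a)) = Polynomial.C (Hq K a) := by
      rw [_root_.map_sub, _root_.map_mul, eA_gp_diag, eA_X_diag, eA_yv]
      ring
    rw [← heArw, ← eR_apply] at h2
    have h3 := (mem_ideal_map_equiv_iff' (eR K a)
      (Jab K A (insert a B)) _).mp h2
    exact hR_not_mem_Jab K a c A B haA hca hcB h3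
  -- the linear polynomial is prime downstairs
  have hFprime := prime_span_linear' p hh hprimep hp0 hHnot
  -- pull back along the quotient map on polynomial rings
  set q : Polynomial (MvPolynomial (Vp a) K) →+* Polynomial (MvPolynomial (Vp a) K ⧸ Iq K a A B) :=
    Polynomial.mapRingHom mkq with hq
  have hqsurj : Function.Surjective q :=
    Polynomial.map_surjective _ Ideal.Quotient.mk_surjective
  have hkerq : RingHom.ker q = Ideal.map Polynomial.C (Iq K a A B) := by
    rw [hq, Polynomial.ker_mapRingHom, Ideal.mk_ker]
  have hqF : q (Polynomial.C (Yq K a a) * Polynomial.X + Polynomial.C (Hq K a)) =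
      Polynomial.C p * Polynomial.X + Polynomial.C hh := by
    simp [hq, hpdef, hhdef]
  have hmapJ : Ideal.map (eR K a) (Jab K (insert a A) B) =
      Ideal.span {Polynomial.C (Yq K a a) * Polynomial.X + Polynomial.C (Hq K a)} ⊔
        Ideal.map Polynomial.C (Iq K a A B) := by
    have hsplit : Jab K (insert a A) B = Ideal.span {gp K a} ⊔ Jab K A B := by
      rw [Jab, Jab, Finset.coe_insert, Set.image_insert_eq, Set.insert_union, Ideal.span_insert]
    rw [hsplit, Ideal.map_sup, Ideal.map_span, Set.image_singleton, eR_apply, eA_gp_diag,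
      map_eA_Jab K a B haA]
  have hcomap : Ideal.map (eR K a) (Jab K (insert a A) B) =
      Ideal.comap q (Ideal.span {Polynomial.C p * Polynomial.X + Polynomial.C hh}) := by
    rw [← hqF, ← Set.image_singleton, ← Ideal.map_span, Ideal.comap_map_of_surjective q hqsurj,
      hmapJ]
    congr 1
    rw [← RingHom.ker_eq_comap_bot, hkerq]
  have hprime2 : (Ideal.map (eR K a) (Jab K (insert a A) B)).IsPrime := by
    rw [hcomap]
    exact hFprime.comap q
  exact isPrime_of_map_equiv' (eR K a) hprime2

end Pivot

/-- All the ideals `Jab K A B` with `|A| + |B| < n` are prime. -/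
lemma J_prime (A B : Finset (Fin n)) (hd : Disjoint A B) (hcard : A.card + B.card < n) :
    (Jab K A B).IsPrime := by
  classical
  induction A using Finset.induction_on generalizing B with
  | empty =>
    have heq : Jab K ∅ B = Ideal.span (X '' ((fun j => yv j) '' ↑B)) := by
      rw [Jab]
      congr 1
      simp [Set.image_image]
    rw [heq]
    exact prime_span_X_image _
  | @insert a A haA ih =>
    have haB : a ∉ B := Finset.disjoint_left.mp hd (Finset.mem_insert_self a A)
    have hd' : Disjoint A B := Finset.disjoint_of_subset_left (Finset.subset_insert a A) hd
    rw [Finset.card_insert_of_notMem haA] at hcard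
    have hex : ∃ c, c ∉ insert a (A ∪ B) := by
      by_contra hcon
      push_neg at hcon
      have huniv : (insert a (A ∪ B)) = Finset.univ := Finset.eq_univ_iff_forall.mpr hcon
      have h1 : (insert a (A ∪ B)).card ≤ (A ∪ B).card + 1 := Finset.card_insert_le _ _
      have h2 : (A ∪ B).card ≤ A.card + B.card := Finset.card_union_le _ _
      rw [huniv, Finset.card_univ, Fintype.card_fin] at h1
      omega
    obtain ⟨c, hc⟩ := hex
    simp only [Finset.mem_insert, Finset.mem_union, not_or] at hc
    obtain ⟨hca, hcA, hcB⟩ := hc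
    have IH1 : (Jab K A B).IsPrime := ih B hd' (by omega)
    have IH2 : (Jab K A (insert a B)).IsPrime := by
      apply ih (insert a B)
      · rw [Finset.disjoint_insert_right]
        exact ⟨haA, hd'⟩
      · rw [Finset.card_insert_of_notMem haB]
        omega
    exact step_prime K a A B haA haB c hcA hca hcB IH1 IH2

lemma smul_top_eq {R : Type*} [CommRing R] (I : Ideal R) :
    (I • ⊤ : Submodule R R) = I := by
  apply le_antisymm
  · refine Submodule.smul_le.mpr fun r hr m _ => ?_
    rw [smul_eq_mul]
    exact I.mul_mem_right m hr
  · intro x hx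
    have := Submodule.smul_mem_smul hx (Submodule.mem_top (x := (1 : R)))
    simpa using this

lemma isSMulRegular_of_prime {R : Type*} [CommRing R] {I : Ideal R} (hI : I.IsPrime)
    {r : R} (hr : r ∉ I) :
    IsSMulRegular (R ⧸ (I • ⊤ : Submodule R R)) r := by
  rw [smul_top_eq]
  intro x y hxy
  obtain ⟨x, rfl⟩ := Submodule.Quotient.mk_surjective _ x
  obtain ⟨y, rfl⟩ := Submodule.Quotient.mk_surjective _ y
  have hxy' : Submodule.Quotient.mk (p := (I : Submodule R R)) (r • x) =
      Submodule.Quotient.mk (r • y) := by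
    rw [Submodule.Quotient.mk_smul, Submodule.Quotient.mk_smul]
    exact hxy
  rw [Submodule.Quotient.eq] at hxy'
  rw [Submodule.Quotient.eq]
  have hmem : r * (x - y) ∈ I := by
    have heq : r • x - r • y = r * (x - y) := by
      simp only [smul_eq_mul]; ring
    rwa [heq] at hxy'
  rcases hI.mem_or_mem hmem with h | h
  · exact absurd h hr
  · exact h

lemma constantCoeff_gp (i : Fin n) : constantCoeff (gp K i) = 0 := by
  simp [gp]

lemma take_ofFn_eq_Jab (i : ℕ) :
    Ideal.ofList ((List.ofFn (fun j => gp K j)).take i) =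
      Jab K (Finset.univ.filter (fun j : Fin n => (j : ℕ) < i)) ∅ := by
  classical
  rw [Jab]
  have hset : {r | r ∈ (List.ofFn (fun j => gp K j)).take i} =
      ((fun j => gp K j) '' ↑(Finset.univ.filter (fun j : Fin n => (j : ℕ) < i)) ∪
        (fun j => X (yv j)) '' ((∅ : Finset (Fin n)) : Set (Fin n))) := by
    ext x
    simp only [Set.mem_setOf_eq, Finset.coe_empty, Set.image_empty, Set.union_empty,
      Set.mem_image, Finset.mem_coe, Finset.mem_filter, Finset.mem_univ, true_and]
    constructor
    · intro hx
      rw [List.mem_take_iff_getElem] at hx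
      obtain ⟨j, hj, hx⟩ := hx
      simp only [List.length_ofFn, lt_min_iff] at hj
      rw [List.getElem_ofFn] at hx
      exact ⟨⟨j, hj.2⟩, hj.1, hx⟩
    · rintro ⟨j, hji, rfl⟩
      rw [List.mem_take_iff_getElem]
      refine ⟨(j : ℕ), ?_, ?_⟩
      · simp only [List.length_ofFn, lt_min_iff]
        exact ⟨hji, j.isLt⟩
      · rw [List.getElem_ofFn]
  show Ideal.span _ = Ideal.span _
  rw [hset]

end SymmRegAux

/-- For the generic symmetric `n × n` matrix `X` (variables `x_{ij}` for
`i ≤ j`) and the generic column `Y`, the entries of `XY` form a regular sequence in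
`K[x_{ij} (i ≤ j), y_j]`. -/
theorem entries_XY_regular_symmetric
    (K : Type*) [Field K] (n : ℕ)
    (Xmat : Matrix (Fin n) (Fin n)
      (MvPolynomial ({p : Fin n × Fin n // p.1 ≤ p.2} ⊕ Fin n) K))
    (hX : ∀ i j, Xmat i j =
      MvPolynomial.X (Sum.inl ⟨(min i j, max i j), min_le_max⟩))
    (g : Fin n → MvPolynomial ({p : Fin n × Fin n // p.1 ≤ p.2} ⊕ Fin n) K)
    (hg : ∀ i, g i = ∑ k, Xmat i k * MvPolynomial.X (Sum.inr k)) :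
    RingTheory.Sequence.IsRegular
      (MvPolynomial ({p : Fin n × Fin n // p.1 ≤ p.2} ⊕ Fin n) K) (List.ofFn g) := by
  classical
  open SymmRegAux in
  have hgfun : g = fun i => SymmRegAux.gp K i := by
    funext i
    rw [hg i, SymmRegAux.gp]
    refine Finset.sum_congr rfl fun k _ => ?_
    rw [hX i k]
    rfl
  rw [hgfun]
  rw [RingTheory.Sequence.isRegular_iff]
  constructor
  · rw [RingTheory.Sequence.isWeaklyRegular_iff]
    intro i hi
    have hi' : i < n := by simpa using hi
    have hget : (List.ofFn (fun j : Fin n => SymmRegAux.gp K j))[i] = SymmRegAux.gp K ⟨i, hi'⟩ := by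
      rw [List.getElem_ofFn]
    rw [hget, SymmRegAux.take_ofFn_eq_Jab (n := n) K i]
    set A : Finset (Fin n) := Finset.univ.filter (fun j : Fin n => (j : ℕ) < i) with hA
    have hanotmem : (⟨i, hi'⟩ : Fin n) ∉ A := by
      simp [hA]
    have hAcard : A.card < n := by
      have hne : A ≠ Finset.univ := by
        intro h
        exact hanotmem (h ▸ Finset.mem_univ _)
      have := Finset.card_lt_card ((Finset.ssubset_univ_iff).mpr hne)
      rwa [Finset.card_univ, Fintype.card_fin] at this
    have hprime : (SymmRegAux.Jab K A ∅).IsPrime := by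
      apply SymmRegAux.J_prime
      · exact Finset.disjoint_empty_right _
      · simpa using hAcard
    have hnotmem : SymmRegAux.gp K ⟨i, hi'⟩ ∉ SymmRegAux.Jab K A ∅ :=
      SymmRegAux.gp_not_mem_Jab K _ A ∅ hanotmem (Finset.notMem_empty _)
    exact SymmRegAux.isSMulRegular_of_prime hprime hnotmem
  · intro htop
    have h1 : (1 : MvPolynomial ({p : Fin n × Fin n // p.1 ≤ p.2} ⊕ Fin n) K) ∈
        (Ideal.ofList (List.ofFn (fun j : Fin n => SymmRegAux.gp K j)) •
          (⊤ : Submodule (MvPolynomial (SymmRegAux.Vt n) K) (MvPolynomial (SymmRegAux.Vt n) K)) :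
          Submodule (MvPolynomial (SymmRegAux.Vt n) K) (MvPolynomial (SymmRegAux.Vt n) K)) := by
      rw [← htop]
      exact Submodule.mem_top
    rw [SymmRegAux.smul_top_eq] at h1
    have hle : Ideal.ofList (List.ofFn (fun j : Fin n => SymmRegAux.gp K j)) ≤
        RingHom.ker (constantCoeff :
          MvPolynomial ({p : Fin n × Fin n // p.1 ≤ p.2} ⊕ Fin n) K →+* K) := by
      rw [Ideal.span_le]
      intro x hx
      obtain ⟨j, rfl⟩ := List.mem_ofFn.mp hx
      simp only [SetLike.mem_coe, RingHom.mem_ker]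
      exact SymmRegAux.constantCoeff_gp K j
    have := hle h1
    rw [RingHom.mem_ker, _root_.map_one] at this
    exact one_ne_zero this
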